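/- Let ρ : ℝ³ → ℝ be nonnegative, integrable, and radially symmetric. Then for every x ≠ 0, ∫ ρ(y)/|x - y| dy = ∫ ρ(y)/max(|x|,|y|) dy (Newton's theorem for radial densities). -/

import Mathlib

open MeasureTheory

open Set Metric Real
open scoped ENNReal

noncomputable section

local notation "E3" => EuclideanSpace ℝ (Fin 3)
local notation "E2" => EuclideanSpace ℝ (Fin 2)

lemma lintegral_fun_norm_addHaar' {E : Type*} [NormedAddCommGroup E] [NormedSpace ℝ E]
    [Nontrivial E] [MeasurableSpace E] [BorelSpace E] [FiniteDimensional ℝ E]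
    (μ : Measure E) [μ.IsAddHaarMeasure] (φ : ℝ → ℝ≥0∞) (hφ : Measurable φ) :
    ∫⁻ x, φ ‖x‖ ∂μ = μ.toSphere univ *
      ∫⁻ r in Ioi (0:ℝ), ENNReal.ofReal (r ^ (Module.finrank ℝ E - 1)) * φ r :=
  calc
    ∫⁻ x, φ ‖x‖ ∂μ = ∫⁻ x : ({0}ᶜ : Set E), φ ‖(x : E)‖ ∂(μ.comap (↑)) := by
      rw [lintegral_subtype_comap (measurableSet_singleton (0:E)).compl (fun y => φ ‖y‖),
        restrict_compl_singleton]
    _ = ∫⁻ z : sphere (0:E) 1 × Ioi (0:ℝ), φ z.2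
          ∂(μ.toSphere.prod (Measure.volumeIoiPow (Module.finrank ℝ E - 1))) := by
      rw [← (μ.measurePreserving_homeomorphUnitSphereProd).lintegral_comp_emb
        (Homeomorph.measurableEmbedding _) (fun z => φ z.2)]
      exact lintegral_congr fun x => by simp
    _ = μ.toSphere univ *
          ∫⁻ r : Ioi (0:ℝ), φ r ∂(Measure.volumeIoiPow (Module.finrank ℝ E - 1)) := by
      rw [lintegral_prod (fun z : sphere (0:E) 1 × Ioi (0:ℝ) => φ z.2)
        (Measurable.aemeasurable (by fun_prop))]
      simp only [lintegral_const]
      rw [mul_comm]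
    _ = μ.toSphere univ *
          ∫⁻ r in Ioi (0:ℝ), ENNReal.ofReal (r ^ (Module.finrank ℝ E - 1)) * φ r := by
      congr 1
      rw [Measure.volumeIoiPow,
        lintegral_withDensity_eq_lintegral_mul _
          (f := fun r : Ioi (0:ℝ) => ENNReal.ofReal (r.1 ^ (Module.finrank ℝ E - 1)))
          (g := fun r : Ioi (0:ℝ) => φ r.1) (by fun_prop) (by fun_prop)]
      exact lintegral_subtype_comap measurableSet_Ioi
        (fun s : ℝ => ENNReal.ofReal (s ^ (Module.finrank ℝ E - 1)) * φ s)

lemma kernel_integral {a r : ℝ} (ha : 0 < a) (hr : 0 < r) (hne : r ≠ a) :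
    ∫ θ in (0:ℝ)..π, Real.sin θ * (Real.sqrt (a^2 + r^2 - 2*a*r*Real.cos θ))⁻¹
      = 2 / max a r := by
  have hpos : ∀ θ : ℝ, 0 < a^2 + r^2 - 2*a*r*Real.cos θ := by
    intro θ
    nlinarith [pow_two_pos_of_ne_zero (sub_ne_zero.2 hne.symm),
      Real.cos_le_one θ, Real.neg_one_le_cos θ, mul_pos ha hr]
  set F : ℝ → ℝ := fun θ => (a*r)⁻¹ * Real.sqrt (a^2 + r^2 - 2*a*r*Real.cos θ) with hFdef
  have hF : ∀ θ : ℝ, HasDerivAt F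
      (Real.sin θ * (Real.sqrt (a^2 + r^2 - 2*a*r*Real.cos θ))⁻¹) θ := by
    intro θ
    have hc : HasDerivAt (fun θ : ℝ => a^2 + r^2 - 2*a*r*Real.cos θ)
        (2*a*r*Real.sin θ) θ := by
      have hc0 := (Real.hasDerivAt_cos θ).const_mul (2*a*r)
      have := (hasDerivAt_const θ (a^2 + r^2)).sub hc0
      refine this.congr_deriv ?_
      ring
    have hs := hc.sqrt (ne_of_gt (hpos θ))
    have := hs.const_mul ((a*r)⁻¹)
    refine this.congr_deriv ?_
    have h1 : Real.sqrt (a^2 + r^2 - 2*a*r*Real.cos θ) ≠ 0 :=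
      ne_of_gt (Real.sqrt_pos.2 (hpos θ))
    field_simp
  have hcont : Continuous fun θ : ℝ =>
      Real.sin θ * (Real.sqrt (a^2 + r^2 - 2*a*r*Real.cos θ))⁻¹ := by
    refine Real.continuous_sin.mul (Continuous.inv₀ ?_ ?_)
    · exact Real.continuous_sqrt.comp (by continuity)
    · exact fun θ => ne_of_gt (Real.sqrt_pos.2 (hpos θ))
  rw [intervalIntegral.integral_eq_sub_of_hasDerivAt (fun θ _ => hF θ)
    (hcont.intervalIntegrable 0 π)]
  have e1 : a^2 + r^2 - 2*a*r*Real.cos π = (a+r)^2 := by rw [Real.cos_pi]; ring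
  have e2 : a^2 + r^2 - 2*a*r*Real.cos 0 = (a-r)^2 := by rw [Real.cos_zero]; ring
  rw [hFdef]
  simp only
  rw [e1, e2, Real.sqrt_sq (by positivity), Real.sqrt_sq_eq_abs]
  rcases lt_or_gt_of_ne hne with h | h
  · rw [abs_of_pos (by linarith), max_eq_left h.le]
    field_simp
    ring
  · rw [abs_of_neg (by linarith), max_eq_right h.le]
    field_simp
    ring

lemma lintegral_ofReal_Ioo_pi (f : ℝ → ℝ) (hcont : Continuous f)
    (hnn : ∀ θ ∈ Ioo (0:ℝ) π, 0 ≤ f θ) :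
    ∫⁻ θ in Ioo (0:ℝ) π, ENNReal.ofReal (f θ) = ENNReal.ofReal (∫ θ in (0:ℝ)..π, f θ) := by
  rw [intervalIntegral.integral_of_le Real.pi_pos.le, integral_Ioc_eq_integral_Ioo]
  rw [← ofReal_integral_eq_lintegral_ofReal]
  · exact (hcont.integrableOn_Icc).mono_set Ioo_subset_Icc_self
  · exact (ae_restrict_iff' measurableSet_Ioo).2 (Filter.Eventually.of_forall hnn)

lemma exists_radial_repr (ρ : E3 → ℝ) (hint : Integrable ρ)
    (hrad : ∀ y z : E3, ‖y‖ = ‖z‖ → ρ y = ρ z) :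
    ∃ g : ℝ → ℝ≥0∞, Measurable g ∧
      (fun y : E3 => ENNReal.ofReal (ρ y)) =ᵐ[volume] fun y => g ‖y‖ := by
  classical
  set R : E3 → ℝ≥0∞ := fun y => ENNReal.ofReal (ρ y) with hRdef
  have hR : AEMeasurable R volume :=
    ENNReal.measurable_ofReal.comp_aemeasurable hint.aemeasurable
  set R' : E3 → ℝ≥0∞ := hR.mk R with hR'def
  have hR'm : Measurable R' := hR.measurable_mk
  have hRR' : R =ᵐ[volume] R' := hR.ae_eq_mk
  set u₀ : E3 := EuclideanSpace.single 0 1 with hu₀def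
  have hu₀ : ‖u₀‖ = 1 := by simp [hu₀def, EuclideanSpace.norm_single]
  set σ := (volume : Measure E3).toSphere with hσdef
  set τ := Measure.volumeIoiPow (Module.finrank ℝ E3 - 1) with hτdef
  have MP := (volume : Measure E3).measurePreserving_homeomorphUnitSphereProd
  set homeo := homeomorphUnitSphereProd E3 with hhdef
  have MPsymm : MeasurePreserving (⇑homeo.symm) (σ.prod τ)
      ((volume : Measure E3).comap Subtype.val) :=
    MeasurePreserving.symm homeo.toMeasurableEquiv MP
  -- the function on the product space
  set m : sphere (0:E3) 1 × Ioi (0:ℝ) → ℝ≥0∞ :=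
    fun z => R' ((z.2 : ℝ) • (z.1 : E3)) with hmdef
  set P : Ioi (0:ℝ) → ℝ≥0∞ := fun r => R ((r : ℝ) • u₀) with hPdef
  have hnorm : ∀ z : sphere (0:E3) 1 × Ioi (0:ℝ), ‖(z.2 : ℝ) • (z.1 : E3)‖ = (z.2 : ℝ) := by
    rintro ⟨ω, r⟩
    have hω : ‖(ω : E3)‖ = 1 := mem_sphere_zero_iff_norm.1 ω.2
    have hr : (0:ℝ) < (r:ℝ) := r.2
    simp [norm_smul, hω, abs_of_pos hr]
  have hPeq : ∀ z : sphere (0:E3) 1 × Ioi (0:ℝ), R ((z.2 : ℝ) • (z.1 : E3)) = P z.2 := by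
    intro z
    simp only [hRdef, hPdef]
    congr 1
    refine hrad _ _ ?_
    rw [hnorm z, norm_smul, hu₀, mul_one, Real.norm_eq_abs, abs_of_pos z.2.2]
  have hvalsymm : ∀ z : sphere (0:E3) 1 × Ioi (0:ℝ),
      ((homeo.symm z : E3)) = (z.2 : ℝ) • (z.1 : E3) := by
    rintro ⟨ω, r⟩; rfl
  -- m is a.e. equal to P ∘ snd
  have hcompl : MeasurableSet ({(0:E3)}ᶜ) := (measurableSet_singleton _).compl
  have h1 : ∀ᵐ z ∂(σ.prod τ), m z = P z.2 := by
    set N := toMeasurable volume {y : E3 | ¬ R y = R' y} with hNdef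
    have hNnull : volume N = 0 := by
      rw [hNdef, measure_toMeasurable]; exact hRR'
    have hNm : MeasurableSet N := measurableSet_toMeasurable _ _
    rw [ae_iff]
    refine measure_mono_null (t := (⇑homeo.symm) ⁻¹' (Subtype.val ⁻¹' N)) (fun z hz => ?_) ?_
    · have : ¬ R ((z.2:ℝ) • (z.1:E3)) = R' ((z.2:ℝ) • (z.1:E3)) :=
        fun h => hz (h.symm.trans (hPeq z))
      simp only [mem_preimage, hvalsymm z]
      exact subset_toMeasurable _ _ this
    · rw [MPsymm.measure_preimage (hNm.preimage measurable_subtype_coe).nullMeasurableSet,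
        (MeasurableEmbedding.subtype_coe hcompl).comap_apply]
      exact measure_mono_null (image_preimage_subset _ _) hNnull
  -- the candidate density
  have hσfin : σ univ ≠ ⊤ := measure_ne_top σ univ
  have hσ0 : σ univ ≠ 0 := by
    rw [hσdef, Measure.toSphere_apply_univ]
    refine mul_ne_zero ?_ ?_
    · simp [finrank_euclideanSpace_fin]
    · exact (measure_ball_pos _ _ one_pos).ne'
  set g : ℝ → ℝ≥0∞ := fun s => (σ univ)⁻¹ * ∫⁻ ω, R' (s • (ω : E3)) ∂σ with hgdef
  have hgm : Measurable g := by
    refine Measurable.const_mul ?_ _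
    exact Measurable.lintegral_prod_right'
      (f := fun q : ℝ × sphere (0:E3) 1 => R' (q.1 • (q.2 : E3)))
      (hR'm.comp (by fun_prop))
  -- g agrees with P a.e.
  have h3 : ∀ᵐ (r : Ioi (0:ℝ)) ∂τ, ∀ᵐ (ω : sphere (0:E3) 1) ∂σ, m (ω, r) = P r := by
    have h1' : ∀ᵐ w ∂(τ.prod σ), m (Prod.swap w) = P (Prod.swap w).2 :=
      (Measure.measurePreserving_swap).quasiMeasurePreserving.ae h1
    exact Measure.ae_ae_of_ae_prod h1'
  have h4 : ∀ᵐ (r : Ioi (0:ℝ)) ∂τ, g (r : ℝ) = P r := by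
    filter_upwards [h3] with r hr
    have : ∫⁻ ω, R' ((r : ℝ) • (ω : E3)) ∂σ = ∫⁻ _ω, P r ∂σ :=
      lintegral_congr_ae (hr.mono fun ω h => h)
    show (σ univ)⁻¹ * ∫⁻ ω, R' ((r : ℝ) • (ω : E3)) ∂σ = P r
    rw [this, lintegral_const, mul_comm (P r) _, ← mul_assoc,
      ENNReal.inv_mul_cancel hσ0 hσfin, one_mul]
  refine ⟨g, hgm, hRR'.trans ?_⟩
  -- now show R' =ᵐ g ∘ norm
  have hBm : MeasurableSet {y : E3 | ¬ R' y = g ‖y‖} := by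
    have : {y : E3 | ¬ R' y = g ‖y‖} = {y | R' y < g ‖y‖} ∪ {y | g ‖y‖ < R' y} := by
      ext y
      simp only [mem_setOf_eq, mem_union]
      exact ⟨fun h => lt_or_gt_of_ne h, fun h => ne_iff_lt_or_gt.2 h⟩
    rw [this]
    have hgn : Measurable fun y : E3 => g ‖y‖ := hgm.comp measurable_norm
    exact (measurableSet_lt hR'm hgn).union (measurableSet_lt hgn hR'm)
  rw [Filter.eventuallyEq_iff_exists_mem]
  refine ⟨{y : E3 | ¬ R' y = g ‖y‖}ᶜ, ?_, fun y hy => not_not.1 hy⟩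
  rw [mem_ae_iff, compl_compl]
  -- decompose: bad set inside {0} ∪ (bad ∩ {0}ᶜ)
  have hsplit : {y : E3 | ¬ R' y = g ‖y‖} ⊆
      ({y : E3 | ¬ R' y = g ‖y‖} ∩ {(0:E3)}ᶜ) ∪ {(0:E3)} := by
    intro y hy
    by_cases h : y = 0
    · exact Or.inr h
    · exact Or.inl ⟨hy, h⟩
  refine measure_mono_null hsplit (le_antisymm ?_ zero_le)
  refine le_trans (measure_union_le _ _) ?_
  rw [measure_singleton, add_zero]
  -- the main part via the product decomposition
  set B := {y : E3 | ¬ R' y = g ‖y‖} with hBdef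
  have key : volume (B ∩ {(0:E3)}ᶜ) = (σ.prod τ) ((⇑homeo.symm) ⁻¹' (Subtype.val ⁻¹' B)) := by
    rw [MPsymm.measure_preimage (hBm.preimage measurable_subtype_coe).nullMeasurableSet,
      (MeasurableEmbedding.subtype_coe hcompl).comap_apply]
    congr 1
    rw [Subtype.image_preimage_coe]
    exact inter_comm _ _
  rw [key]
  -- bound by two null sets
  set Nτ := toMeasurable τ {r : Ioi (0:ℝ) | ¬ P r = g (r : ℝ)} with hNτdef
  have hNτnull : τ Nτ = 0 := by
    rw [hNτdef, measure_toMeasurable, ← ae_iff]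
    filter_upwards [h4] with r hr using hr.symm
  have hNτm : MeasurableSet Nτ := measurableSet_toMeasurable _ _
  have hsub2 : (⇑homeo.symm) ⁻¹' (Subtype.val ⁻¹' B) ⊆
      {z : sphere (0:E3) 1 × Ioi (0:ℝ) | ¬ m z = P z.2} ∪ Prod.snd ⁻¹' Nτ := by
    intro z hz
    simp only [mem_preimage, hvalsymm z, hBdef, mem_setOf_eq, hnorm z] at hz
    by_cases h : m z = P z.2
    · refine Or.inr (subset_toMeasurable _ _ ?_)
      intro hPg
      exact hz (by rw [show R' ((z.2:ℝ) • (z.1:E3)) = m z from rfl, h, hPg])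
    · exact Or.inl h
  refine le_trans (measure_mono hsub2) ?_
  refine le_trans (measure_union_le _ _) ?_
  have e1 : (σ.prod τ) {z : sphere (0:E3) 1 × Ioi (0:ℝ) | ¬ m z = P z.2} = 0 :=
    ae_iff.1 h1
  have e2 : (σ.prod τ) (Prod.snd ⁻¹' Nτ) = 0 := by
    rw [← univ_prod, Measure.prod_prod, hNτnull, mul_zero]
  rw [e1, e2, add_zero]

lemma pipeline (H : ℝ × ℝ → ℝ≥0∞) (hH : Measurable H) :
    ∫⁻ y : E3, H (y 0, ‖y‖)
      = (volume : Measure E2).toSphere univ *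
        ∫⁻ r in Ioi (0:ℝ), ENNReal.ofReal (r^2) *
          ∫⁻ θ in Ioo (0:ℝ) π, ENNReal.ofReal (Real.sin θ) * H (r * Real.cos θ, r) := by
  have s1 : ∫⁻ y : E3, H (y 0, ‖y‖)
      = ∫⁻ v : Fin 3 → ℝ, H (v 0, Real.sqrt (v 0^2 + v 1^2 + v 2^2)) := by
    rw [← (MeasurePreserving.symm _
        (EuclideanSpace.volume_preserving_symm_measurableEquiv_toLp (ι := Fin 3))).lintegral_comp_emb
      (MeasurableEquiv.measurableEmbedding _) (fun y : E3 => H (y 0, ‖y‖))]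
    refine lintegral_congr fun v => ?_
    have hnorm : ‖(MeasurableEquiv.toLp 2 (Fin 3 → ℝ)).symm.symm v‖
        = Real.sqrt (v 0^2 + v 1^2 + v 2^2) := by
      rw [EuclideanSpace.norm_eq, Fin.sum_univ_three]
      simp [Real.norm_eq_abs, sq_abs]
    rw [show ((MeasurableEquiv.toLp 2 (Fin 3 → ℝ)).symm.symm v) 0 = v 0 from rfl, hnorm]
  have s2 : ∫⁻ v : Fin 3 → ℝ, H (v 0, Real.sqrt (v 0^2 + v 1^2 + v 2^2))
      = ∫⁻ w : ℝ × (Fin 2 → ℝ), H (w.1, Real.sqrt (w.1^2 + w.2 0^2 + w.2 1^2)) := by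
    rw [← (MeasurePreserving.symm _
        (volume_preserving_piFinSuccAbove (fun _ : Fin 3 => ℝ) 0)).lintegral_comp_emb
      (MeasurableEquiv.measurableEmbedding _)
      (fun v : Fin 3 → ℝ => H (v 0, Real.sqrt (v 0^2 + v 1^2 + v 2^2)))]
    refine lintegral_congr fun w => ?_
    simp only [MeasurableEquiv.piFinSuccAbove_symm_apply, Fin.insertNthEquiv_apply,
      Fin.insertNth_zero']
    rw [show (Fin.cons w.1 w.2 : Fin 3 → ℝ) 0 = w.1 from rfl,
      show (Fin.cons w.1 w.2 : Fin 3 → ℝ) 1 = w.2 0 from rfl,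
      show (Fin.cons w.1 w.2 : Fin 3 → ℝ) 2 = w.2 1 from rfl]
  have s3 : ∫⁻ w : ℝ × (Fin 2 → ℝ), H (w.1, Real.sqrt (w.1^2 + w.2 0^2 + w.2 1^2))
      = ∫⁻ z : ℝ × ℝ × ℝ, H (z.1, Real.sqrt (z.1^2 + z.2.1^2 + z.2.2^2)) := by
    have mpC : MeasurePreserving
        (⇑((MeasurableEquiv.refl ℝ).prodCongr (MeasurableEquiv.finTwoArrow (α := ℝ))))
        volume volume :=
      (MeasurePreserving.id volume).prod (volume_preserving_finTwoArrow ℝ)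
    rw [← (MeasurePreserving.symm _ mpC).lintegral_comp_emb
      (MeasurableEquiv.measurableEmbedding _)
      (fun w : ℝ × (Fin 2 → ℝ) => H (w.1, Real.sqrt (w.1^2 + w.2 0^2 + w.2 1^2)))]
    refine lintegral_congr fun z => ?_
    simp [MeasurableEquiv.prodCongr, MeasurableEquiv.finTwoArrow]
  rw [s1, s2, s3]
  -- Tonelli
  have hmeas : Measurable fun z : ℝ × ℝ × ℝ => H (z.1, Real.sqrt (z.1^2 + z.2.1^2 + z.2.2^2)) :=
    hH.comp (by fun_prop)
  rw [Measure.volume_eq_prod, lintegral_prod _ hmeas.aemeasurable]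
  -- inner 2D integral
  have inner1 : ∀ t : ℝ, ∫⁻ p : ℝ × ℝ, H (t, Real.sqrt (t^2 + p.1^2 + p.2^2))
      = (volume : Measure E2).toSphere univ *
        ∫⁻ s in Ioi (0:ℝ), ENNReal.ofReal s * H (t, Real.sqrt (t^2 + s^2)) := by
    intro t
    have e1 : ∫⁻ q : E2, H (t, Real.sqrt (t^2 + ‖q‖^2))
        = ∫⁻ p : ℝ × ℝ, H (t, Real.sqrt (t^2 + p.1^2 + p.2^2)) := by
      have mpC : MeasurePreserving (⇑(MeasurableEquiv.finTwoArrow (α := ℝ))) volume volume :=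
        volume_preserving_finTwoArrow ℝ
      rw [← (MeasurePreserving.symm _
          (EuclideanSpace.volume_preserving_symm_measurableEquiv_toLp (ι := Fin 2))).lintegral_comp_emb
        (MeasurableEquiv.measurableEmbedding _)
        (fun q : E2 => H (t, Real.sqrt (t^2 + ‖q‖^2))),
        ← (MeasurePreserving.symm _ mpC).lintegral_comp_emb
        (MeasurableEquiv.measurableEmbedding _)
        (fun w : Fin 2 → ℝ =>
          H (t, Real.sqrt (t^2 + ‖(MeasurableEquiv.toLp 2 (Fin 2 → ℝ)).symm.symm w‖^2)))]
      refine lintegral_congr fun p => ?_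
      have hnorm : ‖(MeasurableEquiv.toLp 2 (Fin 2 → ℝ)).symm.symm
          ((MeasurableEquiv.finTwoArrow (α := ℝ)).symm p)‖^2 = p.1^2 + p.2^2 := by
        rw [EuclideanSpace.norm_eq, Fin.sum_univ_two,
          Real.sq_sqrt (by positivity)]
        simp only [Real.norm_eq_abs, sq_abs]
        rw [show (MeasurableEquiv.toLp 2 (Fin 2 → ℝ)).symm.symm
            ((MeasurableEquiv.finTwoArrow (α := ℝ)).symm p) 0 = p.1 from rfl,
          show (MeasurableEquiv.toLp 2 (Fin 2 → ℝ)).symm.symm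
            ((MeasurableEquiv.finTwoArrow (α := ℝ)).symm p) 1 = p.2 from rfl]
      rw [hnorm, ← add_assoc]
    rw [← e1]
    rw [lintegral_fun_norm_addHaar' (volume : Measure E2)
      (fun s => H (t, Real.sqrt (t^2 + s^2))) (hH.comp (by fun_prop))]
    congr 1
    refine setLIntegral_congr_fun measurableSet_Ioi (fun s hs => ?_)
    rw [finrank_euclideanSpace_fin]
    norm_num
  simp_rw [inner1]
  -- pull the constant out
  have hmeas2 : Measurable fun t : ℝ =>
      ∫⁻ s in Ioi (0:ℝ), ENNReal.ofReal s * H (t, Real.sqrt (t^2 + s^2)) := by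
    refine Measurable.lintegral_prod_right'
      (f := fun z : ℝ × ℝ => ENNReal.ofReal z.2 * H (z.1, Real.sqrt (z.1^2 + z.2^2))) ?_
    exact Measurable.mul (by fun_prop) (hH.comp (by fun_prop))
  rw [lintegral_const_mul _ hmeas2]
  congr 1
  -- polar coordinates step
  set Ψ : ℝ × ℝ → ℝ≥0∞ := fun z => ENNReal.ofReal z.2 * H (z.1, Real.sqrt (z.1^2 + z.2^2))
    with hΨdef
  have hΨm : Measurable Ψ := by
    apply Measurable.mul
    · fun_prop
    · exact hH.comp (by fun_prop)
  have pack : ∫⁻ t : ℝ, ∫⁻ s in Ioi (0:ℝ), ENNReal.ofReal s * H (t, Real.sqrt (t^2 + s^2))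
      = ∫⁻ z in univ ×ˢ Ioi (0:ℝ), Ψ z ∂(volume : Measure (ℝ × ℝ)) := by
    rw [Measure.volume_eq_prod, ← Measure.prod_restrict, Measure.restrict_univ,
      lintegral_prod _ hΨm.aemeasurable]
  rw [pack]
  set S : Set (ℝ × ℝ) := Ioi (0:ℝ) ×ˢ Ioo (0:ℝ) π with hSdef
  have hSm : MeasurableSet S := measurableSet_Ioi.prod measurableSet_Ioo
  have himg : polarCoord.symm '' S = univ ×ˢ Ioi (0:ℝ) := by
    ext z
    constructor
    · rintro ⟨p, ⟨hr, hθ⟩, rfl⟩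
      refine ⟨mem_univ _, ?_⟩
      show 0 < (polarCoord.symm p).2
      rw [polarCoord_symm_apply]
      exact mul_pos hr (Real.sin_pos_of_pos_of_lt_pi hθ.1 hθ.2)
    · rintro ⟨-, hs⟩
      have hs' : (0:ℝ) < z.2 := hs
      set r : ℝ := Real.sqrt (z.1^2 + z.2^2) with hrdef
      have hr0 : 0 < r := Real.sqrt_pos.2 (by positivity)
      have hr2 : r^2 = z.1^2 + z.2^2 := Real.sq_sqrt (by positivity)
      have habs : |z.1| < r := by
        rw [hrdef, ← Real.sqrt_sq_eq_abs]
        exact Real.sqrt_lt_sqrt (sq_nonneg _) (by nlinarith)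
      have hdiv1 : z.1 / r < 1 := (div_lt_one hr0).2 (lt_of_le_of_lt (le_abs_self _) habs)
      have hdiv2 : -1 < z.1 / r := by
        rw [lt_div_iff₀ hr0]
        have := (abs_lt.1 habs).1
        linarith
      refine ⟨(r, Real.arccos (z.1 / r)),
        ⟨hr0, Real.arccos_pos.2 hdiv1, lt_of_le_of_ne (Real.arccos_le_pi _)
          (fun h => by have := Real.arccos_eq_pi.1 h; linarith)⟩, ?_⟩
      rw [polarCoord_symm_apply]
      simp only
      rw [Real.cos_arccos hdiv2.le hdiv1.le, Real.sin_arccos]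
      have h1 : r * (z.1 / r) = z.1 := by field_simp
      have hsq : 1 - (z.1/r)^2 = (z.2/r)^2 := by
        field_simp
        linarith
      rw [h1, hsq, Real.sqrt_sq (by positivity)]
      have h2 : r * (z.2 / r) = z.2 := by field_simp
      rw [h2]
  set B : ℝ × ℝ → ℝ × ℝ →L[ℝ] ℝ × ℝ := fun p =>
    LinearMap.toContinuousLinearMap (Matrix.toLin (Module.Basis.finTwoProd ℝ) (Module.Basis.finTwoProd ℝ)
      !![Real.cos p.2, -p.1 * Real.sin p.2; Real.sin p.2, p.1 * Real.cos p.2]) with hBdef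
  have hder : ∀ p ∈ S, HasFDerivWithinAt polarCoord.symm (B p) S p := fun p _ =>
    (hasFDerivAt_polarCoord_symm p).hasFDerivWithinAt
  have hBdet : ∀ p, (B p).det = p.1 := by
    intro p
    conv_rhs => rw [← one_mul p.1, ← cos_sq_add_sin_sq p.2]
    simp only [hBdef, neg_mul, LinearMap.det_toContinuousLinearMap, LinearMap.det_toLin,
      Matrix.det_fin_two_of, sub_neg_eq_add]
    ring
  have hinj : InjOn polarCoord.symm S := by
    refine (polarCoord.symm.injOn).mono ?_
    rw [OpenPartialHomeomorph.symm_source, polarCoord_target]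
    exact prod_mono subset_rfl (Ioo_subset_Ioo (by linarith [Real.pi_pos]) le_rfl)
  rw [← himg, lintegral_image_eq_lintegral_abs_det_fderiv_mul volume hSm hder hinj Ψ]
  have hcongr : ∫⁻ p in S, ENNReal.ofReal |(B p).det| * Ψ (polarCoord.symm p)
      = ∫⁻ p in S, ENNReal.ofReal (p.1^2) *
          (ENNReal.ofReal (Real.sin p.2) * H (p.1 * Real.cos p.2, p.1)) := by
    refine setLIntegral_congr_fun hSm (fun p hp => ?_)
    obtain ⟨hr, hθ⟩ := hp
    have hr0 : (0:ℝ) < p.1 := hr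
    have hsin : 0 ≤ Real.sin p.2 := (Real.sin_pos_of_pos_of_lt_pi hθ.1 hθ.2).le
    rw [hBdet p, polarCoord_symm_apply]
    have hsqrt : Real.sqrt ((p.1 * Real.cos p.2)^2 + (p.1 * Real.sin p.2)^2) = p.1 := by
      rw [show (p.1 * Real.cos p.2)^2 + (p.1 * Real.sin p.2)^2 = p.1^2 by
        nlinarith [Real.sin_sq_add_cos_sq p.2]]
      exact Real.sqrt_sq hr0.le
    show ENNReal.ofReal |p.1| * (ENNReal.ofReal (p.1 * Real.sin p.2) *
        H (p.1 * Real.cos p.2, Real.sqrt ((p.1 * Real.cos p.2)^2 + (p.1 * Real.sin p.2)^2)))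
      = ENNReal.ofReal (p.1^2) * (ENNReal.ofReal (Real.sin p.2) * H (p.1 * Real.cos p.2, p.1))
    rw [hsqrt, abs_of_pos hr0, ← mul_assoc, ← ENNReal.ofReal_mul hr0.le,
      show p.1 * (p.1 * Real.sin p.2) = p.1^2 * Real.sin p.2 by ring,
      ENNReal.ofReal_mul (sq_nonneg _), mul_assoc]
  have hm2 : Measurable (fun p : ℝ × ℝ => ENNReal.ofReal (p.1^2) *
      (ENNReal.ofReal (Real.sin p.2) * H (p.1 * Real.cos p.2, p.1))) := by
    refine Measurable.mul (by fun_prop) (Measurable.mul (by fun_prop) ?_)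
    exact hH.comp (by fun_prop)
  rw [hcongr, hSdef, Measure.volume_eq_prod, ← Measure.prod_restrict,
    lintegral_prod _ hm2.aemeasurable]
  refine lintegral_congr fun r => ?_
  have hm3 : Measurable (fun θ : ℝ => ENNReal.ofReal (Real.sin θ) * H (r * Real.cos θ, r)) :=
    Measurable.mul (by fun_prop) (hH.comp (by fun_prop))
  show ∫⁻ θ in Ioo (0:ℝ) π, ENNReal.ofReal (r^2) *
      (ENNReal.ofReal (Real.sin θ) * H (r * Real.cos θ, r))
    = ENNReal.ofReal (r^2) * ∫⁻ θ in Ioo (0:ℝ) π, ENNReal.ofReal (Real.sin θ) * H (r * Real.cos θ, r)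
  exact lintegral_const_mul _ hm3

lemma inner_eq {a r : ℝ} (ha : 0 < a) (hr : 0 < r) (hne : r ≠ a) (c : ℝ≥0∞) :
    ∫⁻ θ in Ioo (0:ℝ) π, ENNReal.ofReal (Real.sin θ) *
        (c * ENNReal.ofReal ((Real.sqrt (a^2 + r^2 - 2*a*(r*Real.cos θ)))⁻¹))
      = ∫⁻ θ in Ioo (0:ℝ) π, ENNReal.ofReal (Real.sin θ) *
        (c * ENNReal.ofReal ((max a r)⁻¹)) := by
  have hpos : ∀ θ : ℝ, 0 < a^2 + r^2 - 2*a*r*Real.cos θ := by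
    intro θ
    nlinarith [pow_two_pos_of_ne_zero (sub_ne_zero.2 hne.symm),
      Real.cos_le_one θ, Real.neg_one_le_cos θ, mul_pos ha hr]
  have rearr : ∀ k : ℝ → ℝ≥0∞, Measurable k →
      (∫⁻ θ in Ioo (0:ℝ) π, ENNReal.ofReal (Real.sin θ) * (c * k θ))
        = c * ∫⁻ θ in Ioo (0:ℝ) π, ENNReal.ofReal (Real.sin θ) * k θ := by
    intro k hk
    rw [← lintegral_const_mul c (by fun_prop : Measurable fun θ => ENNReal.ofReal (Real.sin θ) * k θ)]
    exact lintegral_congr fun θ => by ring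
  rw [rearr _ (by fun_prop), rearr _ (by fun_prop)]
  congr 1
  have base1 : ∫⁻ θ in Ioo (0:ℝ) π, ENNReal.ofReal (Real.sin θ) *
      ENNReal.ofReal ((Real.sqrt (a^2 + r^2 - 2*a*(r*Real.cos θ)))⁻¹)
      = ENNReal.ofReal (2 / max a r) := by
    have step : ∫⁻ θ in Ioo (0:ℝ) π, ENNReal.ofReal (Real.sin θ) *
        ENNReal.ofReal ((Real.sqrt (a^2 + r^2 - 2*a*(r*Real.cos θ)))⁻¹)
        = ∫⁻ θ in Ioo (0:ℝ) π,
            ENNReal.ofReal (Real.sin θ * (Real.sqrt (a^2 + r^2 - 2*a*r*Real.cos θ))⁻¹) := by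
      refine setLIntegral_congr_fun measurableSet_Ioo
        (fun θ hθ => ?_)
      rw [show a^2 + r^2 - 2*a*(r*Real.cos θ) = a^2 + r^2 - 2*a*r*Real.cos θ by ring,
        ENNReal.ofReal_mul (Real.sin_nonneg_of_nonneg_of_le_pi hθ.1.le hθ.2.le)]
    rw [step, lintegral_ofReal_Ioo_pi _ ?_ ?_, kernel_integral ha hr hne]
    · refine Real.continuous_sin.mul (Continuous.inv₀ ?_ ?_)
      · exact Real.continuous_sqrt.comp (by continuity)
      · exact fun θ => ne_of_gt (Real.sqrt_pos.2 (hpos θ))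
    · intro θ hθ
      exact mul_nonneg (Real.sin_nonneg_of_nonneg_of_le_pi hθ.1.le hθ.2.le)
        (inv_nonneg.2 (Real.sqrt_nonneg _))
  have base2 : ∫⁻ θ in Ioo (0:ℝ) π, ENNReal.ofReal (Real.sin θ) *
      ENNReal.ofReal ((max a r)⁻¹) = ENNReal.ofReal (2 / max a r) := by
    have step : ∫⁻ θ in Ioo (0:ℝ) π, ENNReal.ofReal (Real.sin θ) * ENNReal.ofReal ((max a r)⁻¹)
        = ∫⁻ θ in Ioo (0:ℝ) π, ENNReal.ofReal (Real.sin θ * (max a r)⁻¹) := by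
      refine setLIntegral_congr_fun measurableSet_Ioo
        (fun θ hθ => ?_)
      rw [ENNReal.ofReal_mul (Real.sin_nonneg_of_nonneg_of_le_pi hθ.1.le hθ.2.le)]
    rw [step, lintegral_ofReal_Ioo_pi _ ?_ ?_]
    · rw [intervalIntegral.integral_mul_const, integral_sin, Real.cos_pi, Real.cos_zero]
      norm_num
      rw [div_eq_mul_inv]
      rw [ENNReal.ofReal_mul (by norm_num), ENNReal.ofReal_ofNat]
    · exact Real.continuous_sin.mul continuous_const
    · intro θ hθ
      exact mul_nonneg (Real.sin_nonneg_of_nonneg_of_le_pi hθ.1.le hθ.2.le)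
        (inv_nonneg.2 (le_max_of_le_left ha.le))
  rw [base1, base2]

theorem newton_theorem_radial (ρ : EuclideanSpace ℝ (Fin 3) → ℝ)
    (hpos : ∀ y, 0 ≤ ρ y) (hint : Integrable ρ)
    (hrad : ∀ y z : EuclideanSpace ℝ (Fin 3), ‖y‖ = ‖z‖ → ρ y = ρ z)
    (x : EuclideanSpace ℝ (Fin 3)) (hx : x ≠ 0) :
    ∫ y, ρ y / ‖x - y‖ = ∫ y, ρ y / max ‖x‖ ‖y‖ := by
  have ha : (0:ℝ) < ‖x‖ := norm_pos_iff.2 hx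
  set a : ℝ := ‖x‖ with hadef
  set u₀ : E3 := EuclideanSpace.single (0 : Fin 3) (1:ℝ) with hu₀def
  have hu₀ : ‖u₀‖ = 1 := by simp [hu₀def, EuclideanSpace.norm_single]
  have hnorm_au : ‖a • u₀‖ = ‖x‖ := by
    rw [norm_smul, hu₀, mul_one, Real.norm_eq_abs, abs_of_pos ha]
  set f := Submodule.reflection (ℝ ∙ (a • u₀ - x))ᗮ with hfdef
  have hfx : f (a • u₀) = x := Submodule.reflection_sub hnorm_au
  have rot : ∫ y, ρ y / ‖x - y‖ = ∫ y, ρ y / ‖a • u₀ - y‖ := by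
    rw [← (f.measurePreserving).integral_comp f.toHomeomorph.measurableEmbedding
      (fun y => ρ y / ‖x - y‖)]
    refine integral_congr_ae (Filter.Eventually.of_forall fun y => ?_)
    have h1 : ρ (f y) = ρ y := hrad _ _ (f.norm_map y)
    have h2 : ‖x - f y‖ = ‖a • u₀ - y‖ := by
      rw [← hfx, ← map_sub, f.norm_map]
    simp only [h1, h2]
  rw [rot]
  obtain ⟨g, hgm, hae⟩ := exists_radial_repr ρ hint hrad
  have hsm1 : AEStronglyMeasurable (fun y : E3 => ρ y / ‖a • u₀ - y‖) volume :=
    (hint.aemeasurable.div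
      ((continuous_const.sub continuous_id).norm.measurable.aemeasurable)).aestronglyMeasurable
  have hsm2 : AEStronglyMeasurable (fun y : E3 => ρ y / max a ‖y‖) volume :=
    (hint.aemeasurable.div
      ((continuous_const.max continuous_norm).measurable.aemeasurable)).aestronglyMeasurable
  rw [integral_eq_lintegral_of_nonneg_ae
      (Filter.Eventually.of_forall fun y => div_nonneg (hpos y) (norm_nonneg _)) hsm1,
    integral_eq_lintegral_of_nonneg_ae
      (Filter.Eventually.of_forall fun y => div_nonneg (hpos y)
        (le_trans ha.le (le_max_left _ _))) hsm2]
  congr 1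
  have keynorm : ∀ y : E3, ‖a • u₀ - y‖ = Real.sqrt (a^2 + ‖y‖^2 - 2*a*(y 0)) := by
    intro y
    rw [← Real.sqrt_sq (norm_nonneg (a • u₀ - y))]
    congr 1
    rw [norm_sub_sq_real]
    have hinner : inner ℝ (a • u₀) y = a * (y 0) := by
      rw [real_inner_smul_left]
      congr 1
      rw [hu₀def, EuclideanSpace.inner_single_left]
      simp
    rw [hinner, hnorm_au]
    ring
  have lhs_eq : ∫⁻ y, ENNReal.ofReal (ρ y / ‖a • u₀ - y‖)
      = ∫⁻ y : E3, (fun p : ℝ × ℝ =>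
          g p.2 * ENNReal.ofReal ((Real.sqrt (a^2 + p.2^2 - 2*a*p.1))⁻¹)) (y 0, ‖y‖) := by
    refine lintegral_congr_ae ?_
    filter_upwards [hae] with y hy
    rw [div_eq_mul_inv, ENNReal.ofReal_mul (hpos y), hy, keynorm y]
  have rhs_eq : ∫⁻ y, ENNReal.ofReal (ρ y / max a ‖y‖)
      = ∫⁻ y : E3, (fun p : ℝ × ℝ =>
          g p.2 * ENNReal.ofReal ((max a p.2)⁻¹)) (y 0, ‖y‖) := by
    refine lintegral_congr_ae ?_
    filter_upwards [hae] with y hy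
    rw [div_eq_mul_inv, ENNReal.ofReal_mul (hpos y), hy]
  rw [lhs_eq, rhs_eq,
    pipeline (fun p : ℝ × ℝ => g p.2 * ENNReal.ofReal ((Real.sqrt (a^2 + p.2^2 - 2*a*p.1))⁻¹))
      (Measurable.mul (hgm.comp measurable_snd) (by fun_prop)),
    pipeline (fun p : ℝ × ℝ => g p.2 * ENNReal.ofReal ((max a p.2)⁻¹))
      (Measurable.mul (hgm.comp measurable_snd) (by fun_prop))]
  congr 1
  refine setLIntegral_congr_fun_ae measurableSet_Ioi ?_
  have hne : ∀ᵐ r ∂(volume : Measure ℝ), r ≠ a := by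
    refine ae_iff.2 ?_
    rw [show {r : ℝ | ¬ r ≠ a} = {a} by ext r; simp]
    exact measure_singleton a
  filter_upwards [hne] with r hra hr
  congr 1
  exact inner_eq ha hr hra (g r)

end
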